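/- Let p be an odd prime, α, β integers with gcd(p,α) = gcd(p,β) = 1, and n, m ≥ 1 with 2m < n. Then pⁿ + pᵐβx + αx² is reducible as a polynomial over the p-adic integers ℤ_p. -/

import Mathlib

open Polynomial

theorem stmt_7 (p : ℕ) [Fact p.Prime] (hodd : Odd p) (α β : ℤ)
    (hα : Int.gcd (p : ℤ) α = 1) (hβ : Int.gcd (p : ℤ) β = 1)
    (n m : ℕ) (hn : 1 ≤ n) (hm : 1 ≤ m) (h : 2 * m < n) :
    ∃ a b : Polynomial ℤ_[p], ¬ IsUnit a ∧ ¬ IsUnit b ∧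
      Polynomial.C ((p : ℤ_[p]) ^ n) + Polynomial.C ((p : ℤ_[p]) ^ m * (β : ℤ_[p])) * Polynomial.X +
        Polynomial.C (α : ℤ_[p]) * Polynomial.X ^ 2 = a * b := by
  have hp : p.Prime := Fact.out
  -- p does not divide α, β, 2
  have hpα : ¬ (p : ℤ) ∣ α := by
    intro hd
    have : (p : ℤ) ∣ (Int.gcd (p : ℤ) α : ℤ) := Int.dvd_coe_gcd dvd_rfl hd
    rw [hα] at this
    have h1 := Int.le_of_dvd one_pos this
    have h2 := hp.two_le
    omega
  have hpβ : ¬ (p : ℤ) ∣ β := by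
    intro hd
    have : (p : ℤ) ∣ (Int.gcd (p : ℤ) β : ℤ) := Int.dvd_coe_gcd dvd_rfl hd
    rw [hβ] at this
    have h1 := Int.le_of_dvd one_pos this
    have h2 := hp.two_le
    omega
  have hp2 : ¬ (p : ℤ) ∣ 2 := by
    intro hd
    have : p ∣ 2 := by exact_mod_cast Int.natCast_dvd_natCast.mp (by exact_mod_cast hd)
    have hpe := (Nat.prime_dvd_prime_iff_eq hp Nat.prime_two).mp this
    subst hpe
    simp [Nat.odd_iff] at hodd
  -- norm-one / unit facts for integer casts
  have unit_of_not_dvd : ∀ k : ℤ, ¬ (p : ℤ) ∣ k → IsUnit ((k : ℤ_[p])) := by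
    intro k hk
    rw [PadicInt.isUnit_iff]
    refine le_antisymm (PadicInt.norm_le_one _) ?_
    by_contra hlt
    push_neg at hlt
    exact hk ((PadicInt.norm_int_lt_one_iff_dvd k).mp hlt)
  have hαu : IsUnit ((α : ℤ_[p])) := unit_of_not_dvd α hpα
  -- Hensel's lemma: β² - 4αp^(n-2m) is a square
  set t := n - 2 * m with ht
  have htpos : 1 ≤ t := by omega
  set u : ℤ_[p] := (β : ℤ_[p]) ^ 2 - 4 * (α : ℤ_[p]) * (p : ℤ_[p]) ^ t with hu
  set F : Polynomial ℤ_[p] := X ^ 2 - C u with hF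
  have hFeval : F.eval (β : ℤ_[p]) = ((4 * α * (p : ℤ) ^ t : ℤ) : ℤ_[p]) := by
    simp [hF, hu]
  have hFderiv : F.derivative.eval (β : ℤ_[p]) = ((2 * β : ℤ) : ℤ_[p]) := by
    simp [hF]
    norm_num
  have hnormd : ‖F.derivative.eval (β : ℤ_[p])‖ = 1 := by
    rw [hFderiv]
    refine le_antisymm (PadicInt.norm_le_one _) ?_
    by_contra hlt
    push_neg at hlt
    have := (PadicInt.norm_int_lt_one_iff_dvd _).mp hlt
    rcases (Int.Prime.dvd_mul' hp this) with h1 | h1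
    · exact hp2 h1
    · exact hpβ h1
  have hnorm : ‖F.eval (β : ℤ_[p])‖ < ‖F.derivative.eval (β : ℤ_[p])‖ ^ 2 := by
    rw [hnormd, hFeval, one_pow]
    rw [PadicInt.norm_int_lt_one_iff_dvd]
    exact Dvd.dvd.mul_left (dvd_pow_self _ (by omega)) _
  obtain ⟨s, hs0, -⟩ := hensels_lemma hnorm
  have hs : s ^ 2 = u := by
    have := hs0
    simp [hF] at this
    linear_combination this
  -- the unit 2α and its inverse
  have h2u : IsUnit ((2 : ℤ_[p]) * (α : ℤ_[p])) := by
    have : ((2 : ℤ) : ℤ_[p]) = (2 : ℤ_[p]) := by push_cast; ring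
    exact (this ▸ unit_of_not_dvd 2 hp2).mul hαu
  obtain ⟨v, hv⟩ := h2u
  set i : ℤ_[p] := ((v⁻¹ : ℤ_[p]ˣ) : ℤ_[p]) with hi
  have hvi : (2 : ℤ_[p]) * (α : ℤ_[p]) * i = 1 := by
    rw [← hv, hi]; exact v.mul_inv
  -- the two roots
  set r : ℤ_[p] := (p : ℤ_[p]) ^ m * (-(β : ℤ_[p]) + s) * i with hr
  set r' : ℤ_[p] := (p : ℤ_[p]) ^ m * (-(β : ℤ_[p]) - s) * i with hr'
  have hpow : (p : ℤ_[p]) ^ m * (p : ℤ_[p]) ^ m * (p : ℤ_[p]) ^ t = (p : ℤ_[p]) ^ n := by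
    rw [← pow_add, ← pow_add]
    congr 1
    omega
  have h1 : (p : ℤ_[p]) ^ m * (β : ℤ_[p]) = -((α : ℤ_[p]) * (r + r')) := by
    rw [hr, hr']
    linear_combination (-((p : ℤ_[p]) ^ m * (β : ℤ_[p]))) * hvi
  have h2 : (p : ℤ_[p]) ^ n = (α : ℤ_[p]) * (r * r') := by
    rw [hr, hr']
    linear_combination (((α : ℤ_[p]) * (p : ℤ_[p]) ^ m * (p : ℤ_[p]) ^ m * i * i)) * hs +
      (-(4 * (α : ℤ_[p]) * (α : ℤ_[p]) * i * i)) * hpow +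
      (-((p : ℤ_[p]) ^ n * (2 * (α : ℤ_[p]) * i + 1))) * hvi +
      ((α : ℤ_[p]) * (p : ℤ_[p]) ^ m * (p : ℤ_[p]) ^ m * i * i) * hu.symm
  have hα0 : (α : ℤ_[p]) ≠ 0 := hαu.ne_zero
  refine ⟨C (α : ℤ_[p]) * X + C (-((α : ℤ_[p]) * r)), X - C r', ?_, ?_, ?_⟩
  · intro hunit
    have := Polynomial.natDegree_eq_zero_of_isUnit hunit
    rw [Polynomial.natDegree_linear hα0] at this
    omega
  · intro hunit
    have := Polynomial.natDegree_eq_zero_of_isUnit hunit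
    rw [Polynomial.natDegree_X_sub_C] at this
    omega
  · rw [h1, h2]
    simp only [map_mul, map_neg, map_add]
    ring
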